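/- Let G ≤ Aut(T) be a weakly branch group. Then for every integer s ≥ 1 the s-th Basilica group Bas_s(G) is a weakly branch group. -/

import Mathlib

/-!
Groups of automorphisms of the `m`-regular rooted tree, encoded via portraits:
an automorphism is determined by the family of its labels (local actions)
`label : List (Fin m) → Equiv.Perm (Fin m)`.
-/

namespace Basilica

/-- An automorphism of the `m`-regular rooted tree, given by its portrait. -/
structure TreeAut (m : ℕ) where
  label : List (Fin m) → Equiv.Perm (Fin m)

namespace TreeAut

variable {m : ℕ}

lemma ext_label {a b : TreeAut m} (h : ∀ u, a.label u = b.label u) : a = b := by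
  cases a
  cases b
  simp only [mk.injEq]
  exact funext h

/-- The section of an automorphism at a vertex. -/
def sec (a : TreeAut m) (v : List (Fin m)) : TreeAut m := ⟨fun u => a.label (v ++ u)⟩

@[simp] lemma sec_label (a : TreeAut m) (v u : List (Fin m)) :
    (a.sec v).label u = a.label (v ++ u) := rfl

@[simp] lemma sec_nil (a : TreeAut m) : a.sec [] = a := rfl

lemma sec_sec (a : TreeAut m) (v w : List (Fin m)) : (a.sec v).sec w = a.sec (v ++ w) :=
  ext_label fun u => by simp [List.append_assoc]

/-- The action of a tree automorphism on the vertices (finite words). -/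
def apply : TreeAut m → List (Fin m) → List (Fin m)
  | _, [] => []
  | a, x :: u => a.label [] x :: (a.sec [x]).apply u

/-- The inverse action of a tree automorphism on the vertices. -/
def invApply : TreeAut m → List (Fin m) → List (Fin m)
  | _, [] => []
  | a, x :: u => (a.label [])⁻¹ x :: (a.sec [(a.label [])⁻¹ x]).invApply u

instance : One (TreeAut m) := ⟨⟨fun _ => 1⟩⟩
instance : Mul (TreeAut m) := ⟨fun a b => ⟨fun u => a.label (b.apply u) * b.label u⟩⟩
instance : Inv (TreeAut m) := ⟨fun a => ⟨fun u => (a.label (a.invApply u))⁻¹⟩⟩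

@[simp] lemma one_label (u : List (Fin m)) : (1 : TreeAut m).label u = 1 := rfl

@[simp] lemma mul_label (a b : TreeAut m) (u : List (Fin m)) :
    (a * b).label u = a.label (b.apply u) * b.label u := rfl

@[simp] lemma inv_label (a : TreeAut m) (u : List (Fin m)) :
    a⁻¹.label u = (a.label (a.invApply u))⁻¹ := rfl

@[simp] lemma one_sec (v : List (Fin m)) : (1 : TreeAut m).sec v = 1 := rfl

@[simp] lemma apply_nil (a : TreeAut m) : a.apply [] = [] := rfl

lemma apply_cons (a : TreeAut m) (x : Fin m) (u : List (Fin m)) :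
    a.apply (x :: u) = a.label [] x :: (a.sec [x]).apply u := rfl

@[simp] lemma one_apply (u : List (Fin m)) : (1 : TreeAut m).apply u = u := by
  induction u with
  | nil => rfl
  | cons x u ih => simp [apply_cons, ih]

lemma apply_append (a : TreeAut m) (v u : List (Fin m)) :
    a.apply (v ++ u) = a.apply v ++ (a.sec v).apply u := by
  induction v generalizing a with
  | nil => simp
  | cons x v ih =>
      simp only [List.cons_append, apply_cons, ih, sec_sec, List.singleton_append,
        List.nil_append]

lemma mul_sec (a b : TreeAut m) (v : List (Fin m)) :
    (a * b).sec v = a.sec (b.apply v) * b.sec v :=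
  ext_label fun u => by simp [apply_append]

lemma mul_apply (a b : TreeAut m) (u : List (Fin m)) :
    (a * b).apply u = a.apply (b.apply u) := by
  induction u generalizing a b with
  | nil => rfl
  | cons x u ih =>
      rw [apply_cons, mul_sec, ih]
      simp [apply_cons, Equiv.Perm.mul_apply]

lemma invApply_apply (a : TreeAut m) (u : List (Fin m)) : a.invApply (a.apply u) = u := by
  induction u generalizing a with
  | nil => rfl
  | cons x u ih => simp [apply_cons, invApply, ih]

lemma apply_invApply (a : TreeAut m) (u : List (Fin m)) : a.apply (a.invApply u) = u := by
  induction u generalizing a with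
  | nil => rfl
  | cons x u ih => simp [invApply, apply_cons, ih]

instance : Group (TreeAut m) where
  mul_assoc a b c := ext_label fun u => by simp [mul_apply, mul_assoc]
  one_mul a := ext_label fun u => by simp
  mul_one a := ext_label fun u => by simp
  inv_mul_cancel a := ext_label fun u => by simp [invApply_apply]

lemma apply_injective (a : TreeAut m) : Function.Injective a.apply := by
  intro x y h
  have hx := invApply_apply a x
  rw [h, invApply_apply] at hx
  exact hx.symm

@[simp] lemma apply_length (a : TreeAut m) (u : List (Fin m)) :
    (a.apply u).length = u.length := by
  induction u generalizing a with
  | nil => rfl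
  | cons x u ih => simp [apply_cons, ih]

/-- `cons ρ f` is `ρ · ψ₁⁻¹(f 0, …, f (m-1))`: the automorphism with root label `ρ`
and first-layer sections `f x`. -/
def cons (ρ : Equiv.Perm (Fin m)) (f : Fin m → TreeAut m) : TreeAut m :=
  ⟨fun u =>
    match u with
    | [] => ρ
    | x :: v => (f x).label v⟩

end TreeAut

variable {m : ℕ}

/-- The `n`-th layer stabiliser `St_G(n)` of a group `G` of tree automorphisms. -/
def layerStab (G : Subgroup (TreeAut m)) (n : ℕ) : Subgroup (TreeAut m) where
  carrier := {g | g ∈ G ∧ ∀ u : List (Fin m), u.length = n → g.apply u = u}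
  one_mem' := ⟨G.one_mem, fun u _ => TreeAut.one_apply u⟩
  mul_mem' := by
    rintro a b ⟨haG, ha⟩ ⟨hbG, hb⟩
    refine ⟨G.mul_mem haG hbG, fun u hu => ?_⟩
    rw [TreeAut.mul_apply, hb u hu, ha u hu]
  inv_mem' := by
    rintro a ⟨haG, ha⟩
    refine ⟨G.inv_mem haG, fun u hu => ?_⟩
    apply TreeAut.apply_injective a
    rw [← TreeAut.mul_apply, mul_inv_cancel, TreeAut.one_apply, ha u hu]

/-- A group of tree automorphisms acts spherically transitively if it acts
transitively on every layer. -/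
def SphericallyTransitive (G : Subgroup (TreeAut m)) : Prop :=
  ∀ u v : List (Fin m), u.length = v.length → ∃ g ∈ G, g.apply u = v

/-- A group of tree automorphisms is self-similar if it is closed under sections. -/
def SelfSimilar (G : Subgroup (TreeAut m)) : Prop :=
  ∀ g ∈ G, ∀ v : List (Fin m), g.sec v ∈ G

/-- A spherically transitive group is fractal if `st_G(u)|_u = G` for all vertices `u`. -/
def Fractal (G : Subgroup (TreeAut m)) : Prop :=
  SphericallyTransitive G ∧
    ∀ u : List (Fin m),
      {h : TreeAut m | ∃ g ∈ G, g.apply u = u ∧ g.sec u = h} = (G : Set (TreeAut m))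

/-- A spherically transitive group is strongly fractal if `St_G(1)|_x = G` for all `x ∈ X`. -/
def StronglyFractal (G : Subgroup (TreeAut m)) : Prop :=
  SphericallyTransitive G ∧
    ∀ x : Fin m,
      {h : TreeAut m | ∃ g ∈ layerStab G 1, g.sec [x] = h} = (G : Set (TreeAut m))

/-- A spherically transitive group is very strongly fractal if
`St_G(n+1)|_x = St_G(n)` for all `n` and `x ∈ X`. -/
def VeryStronglyFractal (G : Subgroup (TreeAut m)) : Prop :=
  SphericallyTransitive G ∧
    ∀ (n : ℕ) (x : Fin m),
      {h : TreeAut m | ∃ g ∈ layerStab G (n + 1), g.sec [x] = h}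
        = (layerStab G n : Set (TreeAut m))

/-- A group of tree automorphisms is contracting if it has a finite nucleus. -/
def Contracting (G : Subgroup (TreeAut m)) : Prop :=
  ∃ N : Set (TreeAut m), N.Finite ∧ N ⊆ (G : Set (TreeAut m)) ∧
    ∀ g ∈ G, ∃ k : ℕ, ∀ v : List (Fin m), k < v.length → g.sec v ∈ N

/-- A tree automorphism is finite-state if it has finitely many distinct sections. -/
def FiniteState (f : TreeAut m) : Prop :=
  {h : TreeAut m | ∃ u : List (Fin m), f.sec u = h}.Finite

/-- A tree automorphism is bounded if the number of nontrivial sections at the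
`n`-th layer is bounded uniformly in `n`. -/
def BoundedAut (f : TreeAut m) : Prop :=
  ∃ C : ℕ, ∀ n : ℕ, {u : List (Fin m) | u.length = n ∧ f.sec u ≠ 1}.ncard ≤ C

/-- The `n`-th rigid layer stabiliser: the subgroup generated by the rigid vertex
stabilisers of the vertices of the `n`-th layer. -/
def rigidLayerStab (G : Subgroup (TreeAut m)) (n : ℕ) : Subgroup (TreeAut m) :=
  Subgroup.closure {g | g ∈ G ∧ ∃ v : List (Fin m), v.length = n ∧
    ∀ u : List (Fin m), ¬ v <+: u → g.apply u = u}

/-- A weakly branch group: spherically transitive with nontrivial rigid layer stabilisers. -/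
def WeaklyBranch (G : Subgroup (TreeAut m)) : Prop :=
  SphericallyTransitive G ∧ ∀ n : ℕ, rigidLayerStab G n ≠ ⊥

/-- `H` is weakly regular branch over `K ≤ H` if `ψ₁(St_K(1)) ⊇ K × ⋯ × K`. -/
def WeaklyRegularBranchOver (H K : Subgroup (TreeAut m)) : Prop :=
  K ≤ H ∧ ∀ f : Fin m → TreeAut m, (∀ x, f x ∈ K) → TreeAut.cons 1 f ∈ K

/-- The portrait of the `i`-th Basilica monomorphism `β^s_i` applied to `g`,
computed by recursion over vertices. -/
def betaLabel [NeZero m] (s : ℕ) : List (Fin m) → ℕ → TreeAut m → Equiv.Perm (Fin m)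
  | [], i, g => if i = 0 then g.label [] else 1
  | x :: u, i, g =>
      if i = 0 then betaLabel s u (s - 1) (g.sec [x])
      else if x = 0 then betaLabel s u (i - 1) g else 1

/-- The Basilica monomorphism `β^s_i : Aut(T) → Aut(T)`, satisfying
`β_i(g) = ψ₁⁻¹(β_{i-1}(g), 1, …, 1)` for `1 ≤ i ≤ s-1` and
`β_0(g) = g|^ε · ψ₁⁻¹(β_{s-1}(g|_0), …, β_{s-1}(g|_{m-1}))`. -/
def betaAut [NeZero m] (s i : ℕ) (g : TreeAut m) : TreeAut m := ⟨fun u => betaLabel s u i g⟩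

/-- The `s`-th Basilica group of `G`. -/
def basilica [NeZero m] (s : ℕ) (G : Subgroup (TreeAut m)) : Subgroup (TreeAut m) :=
  Subgroup.closure {b | ∃ g ∈ G, ∃ i < s, b = betaAut s i g}

/-- The subgroup `S_i = ⟨β_j(G) : j ≠ i⟩` of the `s`-th Basilica group. -/
def Ssub [NeZero m] (s i : ℕ) (G : Subgroup (TreeAut m)) : Subgroup (TreeAut m) :=
  Subgroup.closure {b | ∃ g ∈ G, ∃ j < s, j ≠ i ∧ b = betaAut s j g}

/-- The normal closure `N_i` of `S_i` in the `s`-th Basilica group of `G`. -/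
def Nsub [NeZero m] (s i : ℕ) (G : Subgroup (TreeAut m)) : Subgroup (TreeAut m) :=
  Subgroup.closure {x | ∃ b ∈ basilica s G, ∃ y ∈ Ssub s i G, x = b * y * b⁻¹}

/-- The `i`-th splitting kernel `K_i = β_i⁻¹(β_i(G) ∩ N_i)` of `G`, as a set. -/
def Kset [NeZero m] (s i : ℕ) (G : Subgroup (TreeAut m)) : Set (TreeAut m) :=
  {g | g ∈ G ∧ betaAut s i g ∈ Nsub s i G}

/-- The portrait of the monomorphism `π_i` (for the `d`-fold diagonal construction). -/
def piLabel (d : ℕ) : List (Fin m) → ℕ → TreeAut m → Equiv.Perm (Fin m)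
  | [], i, g => if i = 0 then g.label [] else 1
  | x :: u, i, g =>
      if i = 0 then piLabel d u (d - 1) (g.sec [x])
      else piLabel d u (i - 1) g

/-- The monomorphism `π_i : Aut(T) → Aut(T)`, satisfying
`π_0(g) = g|^ε · ψ₁⁻¹(π_{d-1}(g|_0), …, π_{d-1}(g|_{m-1}))` and
`π_i(g) = ψ₁⁻¹(π_{i-1}(g), …, π_{i-1}(g))` for `1 ≤ i ≤ d-1`. -/
def piAut (d i : ℕ) (g : TreeAut m) : TreeAut m := ⟨fun u => piLabel d u i g⟩

/-- The generator of the `m`-adic odometer: `a = σ · ψ₁⁻¹(a, 1, …, 1)` with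
`σ = (0 1 … m-1)`. -/
def odometer (m : ℕ) [NeZero m] : TreeAut m :=
  ⟨fun u => if ∀ x ∈ u, x = 0 then finRotate m else 1⟩

/-- The group `O_m^d = D_d(O_m) = ⟨π_i(a) : 0 ≤ i ≤ d-1⟩`. -/
def OdPow (m d : ℕ) [NeZero m] : Subgroup (TreeAut m) :=
  Subgroup.closure {x | ∃ i < d, x = piAut d i (odometer m)}

/-- The group `Γ` of all automorphisms all of whose labels are powers of the
cycle `σ = (0 1 … m-1)`. -/
def Gamma (m : ℕ) : Subgroup (TreeAut m) where
  carrier := {g | ∀ u : List (Fin m), g.label u ∈ Subgroup.zpowers (finRotate m)}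
  one_mem' := by
    intro u
    rw [TreeAut.one_label]
    exact one_mem _
  mul_mem' := by
    intro a b ha hb u
    rw [TreeAut.mul_label]
    exact mul_mem (ha _) (hb _)
  inv_mem' := by
    intro a ha u
    rw [TreeAut.inv_label]
    exact inv_mem (ha _)

/-- The Hausdorff dimension of `G ≤ Γ` relative to `Γ`. -/
noncomputable def hdim (m : ℕ) (G : Subgroup (TreeAut m)) : ℝ :=
  Filter.liminf (fun n : ℕ =>
    Real.logb m ((layerStab G n).relIndex G) /
      Real.logb m ((layerStab (Gamma m) n).relIndex (Gamma m))) Filter.atTop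

/-- The series of obstructions `o_G(n) = m·log_m|L_G(n-1)| - log_m|L_G(n)|` (for `n ≥ 1`),
where `L_G(n) = St_G(n)/St_G(n+1)`. -/
noncomputable def obstruction (m : ℕ) (G : Subgroup (TreeAut m)) (n : ℕ) : ℝ :=
  m * Real.logb m ((layerStab G n).relIndex (layerStab G (n - 1)))
    - Real.logb m ((layerStab G (n + 1)).relIndex (layerStab G n))

/-- The permutation group induced by `G` on the first layer acts regularly on `X`. -/
def RegularRootAction (G : Subgroup (TreeAut m)) : Prop :=
  (∀ x y : Fin m, ∃ g ∈ G, g.label [] x = y) ∧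
    ∀ g ∈ G, ∀ x : Fin m, g.label [] x = x → g.label [] = 1


/-! ### Auxiliary lemmas for Statement 4. -/

section Aux

variable [NeZero m]

lemma betaLabel_nil' (s i : ℕ) (g : TreeAut m) :
    betaLabel s [] i g = if i = 0 then g.label [] else 1 := rfl

lemma betaLabel_cons' (s : ℕ) (x : Fin m) (u : List (Fin m)) (i : ℕ) (g : TreeAut m) :
    betaLabel s (x :: u) i g =
      if i = 0 then betaLabel s u (s - 1) (g.sec [x])
      else if x = 0 then betaLabel s u (i - 1) g else 1 := rfl

lemma betaAut_label' (s i : ℕ) (g : TreeAut m) (u : List (Fin m)) :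
    (betaAut s i g).label u = betaLabel s u i g := rfl

lemma betaAut_label_nil (s : ℕ) (g : TreeAut m) :
    (betaAut s 0 g).label [] = g.label [] := rfl

lemma betaAut_label_nil_pos (s j : ℕ) (hj : j ≠ 0) (g : TreeAut m) :
    (betaAut s j g).label [] = 1 := by
  show betaLabel s [] j g = 1
  rw [betaLabel_nil', if_neg hj]

lemma betaAut_sec_zero (s j : ℕ) (hj : j ≠ 0) (g : TreeAut m) :
    (betaAut s j g).sec [0] = betaAut s (j - 1) g := by
  apply TreeAut.ext_label
  intro u
  show betaLabel s (0 :: u) j g = betaLabel s u (j - 1) g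
  rw [betaLabel_cons', if_neg hj, if_pos rfl]

lemma betaAut_zero_sec (s : ℕ) (g : TreeAut m) (x : Fin m) :
    (betaAut s 0 g).sec [x] = betaAut s (s - 1) (g.sec [x]) := by
  apply TreeAut.ext_label
  intro u
  show betaLabel s (x :: u) 0 g = betaLabel s u (s - 1) (g.sec [x])
  rw [betaLabel_cons', if_pos rfl]

lemma beta_apply_replicate (s j : ℕ) (h : TreeAut m) (z : List (Fin m)) :
    (betaAut s j h).apply (List.replicate j 0 ++ z)
      = List.replicate j 0 ++ (betaAut s 0 h).apply z := by
  induction j with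
  | zero => simp
  | succ k ih =>
      rw [List.replicate_succ, List.cons_append, TreeAut.apply_cons,
        betaAut_label_nil_pos s (k + 1) (Nat.succ_ne_zero k) h,
        betaAut_sec_zero s (k + 1) (Nat.succ_ne_zero k) h, Nat.add_sub_cancel, ih]
      simp

lemma beta_zero_apply_zeros {s : ℕ} (hs : 1 ≤ s) :
    ∀ (q : ℕ) (g : TreeAut m) (a b : Fin m),
      g.apply (List.replicate q 0 ++ [a]) = List.replicate q 0 ++ [b] →
      (betaAut s 0 g).apply (List.replicate (q * s) 0 ++ [a])
        = List.replicate (q * s) 0 ++ [b] := by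
  intro q
  induction q with
  | zero =>
      intro g a b hg
      simp only [List.replicate_zero, List.nil_append, Nat.zero_mul] at *
      rw [TreeAut.apply_cons] at hg ⊢
      simp only [TreeAut.apply_nil] at hg ⊢
      rw [betaAut_label_nil]
      exact hg
  | succ q ih =>
      intro g a b hg
      rw [List.replicate_succ, List.cons_append, TreeAut.apply_cons,
        List.cons_append] at hg
      rw [List.cons.injEq] at hg
      obtain ⟨h0, hrest⟩ := hg
      have hrep : List.replicate ((q + 1) * s) (0 : Fin m)
          = 0 :: (List.replicate (s - 1) 0 ++ List.replicate (q * s) 0) := by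
        have h1 : (q + 1) * s = 1 + ((s - 1) + q * s) := by
          rw [Nat.succ_mul]; omega
        rw [h1, List.replicate_add, List.replicate_add, List.replicate_one]
        rfl
      rw [hrep, List.cons_append, TreeAut.apply_cons, betaAut_label_nil, h0,
        betaAut_zero_sec, List.append_assoc, beta_apply_replicate,
        ih (g.sec [0]) a b hrest]
      rw [List.cons_append, List.append_assoc]

lemma closure_ne_bot_iff {S : Set (TreeAut m)} :
    Subgroup.closure S ≠ ⊥ ↔ ∃ g ∈ S, g ≠ 1 := by
  rw [ne_eq, Subgroup.closure_eq_bot_iff]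
  constructor
  · intro h
    by_contra hc
    push_neg at hc
    exact h fun g hg => by simpa using hc g hg
  · rintro ⟨g, hgS, hg1⟩ hsub
    exact hg1 (by simpa using hsub hgS)

lemma basilica_fiber_zeros {s : ℕ} (hs : 1 ≤ s) (G : Subgroup (TreeAut m))
    (hT : SphericallyTransitive G) (p : ℕ) (a b : Fin m) :
    ∃ c ∈ basilica s G,
      c.apply (List.replicate p 0 ++ [a]) = List.replicate p 0 ++ [b] := by
  obtain ⟨g, hgG, hg⟩ := hT (List.replicate (p / s) 0 ++ [a])
    (List.replicate (p / s) 0 ++ [b]) (by simp)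
  refine ⟨betaAut s (p % s) g, Subgroup.subset_closure
    ⟨g, hgG, p % s, Nat.mod_lt _ (by omega), rfl⟩, ?_⟩
  have hrep : List.replicate p (0 : Fin m)
      = List.replicate (p % s) 0 ++ List.replicate ((p / s) * s) 0 := by
    rw [← List.replicate_add]
    congr 1
    rw [Nat.mul_comm]
    exact (Nat.mod_add_div p s).symm
  rw [hrep, List.append_assoc, beta_apply_replicate,
    beta_zero_apply_zeros hs (p / s) g a b hg, List.append_assoc]

lemma apply_concat (g : TreeAut m) (y : List (Fin m)) (a : Fin m) :
    g.apply (y ++ [a]) = g.apply y ++ [g.label y a] := by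
  rw [TreeAut.apply_append, TreeAut.apply_cons, TreeAut.apply_nil]
  congr 2
  show g.label (y ++ []) a = g.label y a
  rw [List.append_nil]

lemma basilica_sphericallyTransitive {s : ℕ} (hs : 1 ≤ s) (G : Subgroup (TreeAut m))
    (hT : SphericallyTransitive G) : SphericallyTransitive (basilica s G) := by
  suffices H : ∀ (n : ℕ) (u w : List (Fin m)), u.length = n → w.length = n →
      ∃ c ∈ basilica s G, c.apply u = w by
    intro u w huw
    exact H u.length u w rfl huw.symm
  intro n
  induction n with
  | zero =>
      intro u w hu hw
      rw [List.length_eq_zero_iff] at hu hw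
      subst hu; subst hw
      exact ⟨1, one_mem _, TreeAut.one_apply []⟩
  | succ n ih =>
      intro u w hu hw
      obtain huc | ⟨y, a, rfl⟩ := u.eq_nil_or_concat
      · subst huc; simp at hu
      obtain hwc | ⟨z, b, rfl⟩ := w.eq_nil_or_concat
      · subst hwc; simp at hw
      rw [List.concat_eq_append] at hu hw ⊢
      simp only [List.length_append, List.length_cons, List.length_nil] at hu hw
      have hy : y.length = n := by omega
      have hz : z.length = n := by omega
      obtain ⟨c₃, hc₃B, hc₃⟩ := ih y (List.replicate n 0) hy (by simp)
      obtain ⟨c₅, hc₅B, hc₅⟩ := ih z (List.replicate n 0) hz (by simp)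
      obtain ⟨c₄, hc₄B, hc₄⟩ := basilica_fiber_zeros hs G hT n
        (c₃.label y a) (c₅.label z b)
      refine ⟨c₅⁻¹ * (c₄ * c₃), mul_mem (inv_mem hc₅B) (mul_mem hc₄B hc₃B), ?_⟩
      have h3 : c₃.apply (y ++ [a]) = List.replicate n 0 ++ [c₃.label y a] := by
        rw [apply_concat, hc₃]
      have h5 : c₅.apply (z ++ [b]) = List.replicate n 0 ++ [c₅.label z b] := by
        rw [apply_concat, hc₅]
      rw [TreeAut.mul_apply, TreeAut.mul_apply, h3, hc₄, ← h5,
        ← TreeAut.mul_apply, inv_mul_cancel, TreeAut.one_apply, List.concat_eq_append]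

/-- The word `δ(v)` at which `β₀(g)` mirrors the behaviour of `g` at `v`. -/
def deltaWord (s : ℕ) : List (Fin m) → List (Fin m)
  | [] => []
  | x :: u => x :: (List.replicate (s - 1) 0 ++ deltaWord s u)

lemma length_le_deltaWord (s : ℕ) (v : List (Fin m)) :
    v.length ≤ (deltaWord s v).length := by
  induction v with
  | nil => simp [deltaWord]
  | cons x u ih =>
      simp only [deltaWord, List.length_cons, List.length_append]
      omega

lemma betaLabel_replicate (s : ℕ) :
    ∀ (j : ℕ) (w : List (Fin m)) (h : TreeAut m),
      betaLabel s (List.replicate j 0 ++ w) j h = betaLabel s w 0 h := by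
  intro j
  induction j with
  | zero => intro w h; rfl
  | succ k ih =>
      intro w h
      rw [List.replicate_succ, List.cons_append, betaLabel_cons',
        if_neg (Nat.succ_ne_zero k), if_pos rfl, Nat.add_sub_cancel, ih]

lemma betaLabel_deltaWord (s : ℕ) :
    ∀ (u : List (Fin m)) (g : TreeAut m),
      betaLabel s (deltaWord s u) 0 g = g.label u := by
  intro u
  induction u with
  | nil => intro g; rfl
  | cons x u ih =>
      intro g
      show betaLabel s (x :: (List.replicate (s - 1) 0 ++ deltaWord s u)) 0 g = _
      rw [betaLabel_cons', if_pos rfl, betaLabel_replicate, ih]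
      rfl

lemma betaLabel_of_all_one (s : ℕ) :
    ∀ (w : List (Fin m)) (j : ℕ) (g : TreeAut m),
      (∀ u, g.label u = 1) → betaLabel s w j g = 1 := by
  intro w
  induction w with
  | nil =>
      intro j g hg
      rw [betaLabel_nil', hg []]
      split <;> rfl
  | cons x w ih =>
      intro j g hg
      rw [betaLabel_cons']
      by_cases hj : j = 0
      · rw [if_pos hj]
        exact ih _ _ fun u => hg ([x] ++ u)
      · rw [if_neg hj]
        by_cases hx : x = 0
        · rw [if_pos hx]; exact ih _ _ hg
        · rw [if_neg hx]

/-- Label-support of `g` at `v` transfers to label-support of `β_j(g)` at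
`0^j · δ(v)`. -/
lemma betaLabel_supp (s : ℕ) :
    ∀ (w : List (Fin m)) (j : ℕ) (g : TreeAut m) (v : List (Fin m)),
      (∀ w', ¬ v <+: w' → g.label w' = 1) →
      ¬ (List.replicate j 0 ++ deltaWord s v) <+: w → betaLabel s w j g = 1 := by
  intro w
  induction w with
  | nil =>
      intro j g v hgv hpre
      rw [betaLabel_nil']
      by_cases hj : j = 0
      · rw [if_pos hj]
        subst hj
        rw [List.replicate_zero, List.nil_append] at hpre
        apply hgv
        intro hv
        rw [List.prefix_nil] at hv
        subst hv
        exact hpre (by simp [deltaWord])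
      · rw [if_neg hj]
  | cons x w ih =>
      intro j g v hgv hpre
      rw [betaLabel_cons']
      by_cases hj : j = 0
      · rw [if_pos hj]
        subst hj
        rw [List.replicate_zero, List.nil_append] at hpre
        cases v with
        | nil => exact absurd (List.nil_prefix) hpre
        | cons y v' =>
            by_cases hxy : x = y
            · subst hxy
              refine ih (s - 1) (g.sec [x]) v' ?_ ?_
              · intro w' hw'
                show g.label (x :: w') = 1
                apply hgv
                rw [List.cons_prefix_cons]
                rintro ⟨-, hp⟩
                exact hw' hp
              · intro hp
                apply hpre
                show (x :: (List.replicate (s - 1) 0 ++ deltaWord s v')) <+: x :: w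
                rw [List.cons_prefix_cons]
                exact ⟨rfl, hp⟩
            · apply betaLabel_of_all_one
              intro u
              show g.label (x :: u) = 1
              apply hgv
              rw [List.cons_prefix_cons]
              rintro ⟨h, -⟩
              exact hxy h.symm
      · rw [if_neg hj]
        by_cases hx : x = 0
        · rw [if_pos hx]
          obtain ⟨k, rfl⟩ : ∃ k, j = k + 1 := ⟨j - 1, by omega⟩
          rw [Nat.add_sub_cancel]
          refine ih k g v hgv ?_
          intro hp
          apply hpre
          rw [List.replicate_succ, List.cons_append, hx, List.cons_prefix_cons]
          exact ⟨rfl, hp⟩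
        · rw [if_neg hx]

/-- If all labels of `g` outside the subtree at `v` are trivial, then `g` fixes
every vertex outside the subtree at `v`. -/
lemma apply_of_label_supp :
    ∀ (u : List (Fin m)) (g : TreeAut m) (v : List (Fin m)),
      (∀ w, ¬ v <+: w → g.label w = 1) → ¬ v <+: u → g.apply u = u := by
  intro u
  induction u with
  | nil => intro g v _ _; rfl
  | cons x u ih =>
      intro g v hgv hpre
      cases v with
      | nil => exact absurd (List.nil_prefix) hpre
      | cons y v' =>
          have h0 : g.label [] = 1 := by
            apply hgv
            intro hp
            rw [List.prefix_nil] at hp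
            exact List.cons_ne_nil y v' hp
          rw [TreeAut.apply_cons, h0, Equiv.Perm.one_apply]
          by_cases hxy : x = y
          · subst hxy
            congr 1
            refine ih (g.sec [x]) v' ?_ ?_
            · intro w hw
              show g.label (x :: w) = 1
              apply hgv
              rw [List.cons_prefix_cons]
              rintro ⟨-, hp⟩
              exact hw hp
            · intro hp
              apply hpre
              rw [List.cons_prefix_cons]
              exact ⟨rfl, hp⟩
          · have hsec : g.sec [x] = 1 := by
              apply TreeAut.ext_label
              intro w
              show g.label (x :: w) = (1 : TreeAut m).label w
              rw [TreeAut.one_label]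
              apply hgv
              rw [List.cons_prefix_cons]
              rintro ⟨h, -⟩
              exact hxy h.symm
            rw [hsec, TreeAut.one_apply]

/-- Conversely, if `g` fixes every vertex outside the subtree at `v`, then all
labels of `g` outside the subtree at `v` are trivial. -/
lemma label_of_apply_supp (g : TreeAut m) (v : List (Fin m))
    (h : ∀ u, ¬ v <+: u → g.apply u = u) :
    ∀ w, ¬ v <+: w → g.label w = 1 := by
  intro w hw
  have hfix : g.apply w = w := h w hw
  apply Equiv.ext
  intro x
  rw [Equiv.Perm.one_apply]
  have happ : ∀ c : Fin m, g.apply (w ++ [c]) = w ++ [g.label w c] := by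
    intro c
    rw [apply_concat, hfix]
  by_cases hp : v <+: w ++ [x]
  · have hvx : v = w ++ [x] := by
      rcases List.prefix_concat_iff.mp hp with h1 | h1
      · exact h1
      · exact absurd h1 hw
    by_contra hne
    have hne' : ¬ v <+: w ++ [g.label w x] := by
      rw [hvx]
      intro hp2
      have := hp2.eq_of_length (by simp)
      have := List.append_inj_right this (rfl)
      simp only [List.cons.injEq, and_true] at this
      exact hne this.symm
    have h2 : g.apply (w ++ [g.label w x]) = w ++ [g.label w x] := h _ hne'
    have h3 : g.apply (w ++ [x]) = g.apply (w ++ [g.label w x]) := by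
      rw [happ x, h2]
    have := TreeAut.apply_injective g h3
    have := List.append_inj_right this (rfl)
    simp only [List.cons.injEq, and_true] at this
    exact hne this.symm
  · have h1 : g.apply (w ++ [x]) = w ++ [x] := h _ hp
    rw [happ x] at h1
    have := List.append_inj_right h1 (rfl)
    simp only [List.cons.injEq, and_true] at this
    exact this

end Aux

/-- If `G ≤ Aut(T)` is a weakly branch group, then for every `s ≥ 1`
the `s`-th Basilica group `Bas_s(G)` is a weakly branch group. -/
theorem basilica_weaklyBranch {m : ℕ} [NeZero m] (hm : 2 ≤ m)
    (G : Subgroup (TreeAut m)) (hG : WeaklyBranch G)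
    (s : ℕ) (hs : 1 ≤ s) :
    WeaklyBranch (basilica s G) := by
  obtain ⟨hT, hR⟩ := hG
  refine ⟨basilica_sphericallyTransitive hs G hT, ?_⟩
  intro n
  -- extract a nontrivial rigid element of `G` at level `n`
  have hRn := hR n
  rw [rigidLayerStab, closure_ne_bot_iff] at hRn
  obtain ⟨g, ⟨hgG, v, hvlen, hvsupp⟩, hg1⟩ := hRn
  -- its labels vanish outside the subtree at `v`
  have hlab : ∀ w, ¬ v <+: w → g.label w = 1 := label_of_apply_supp g v hvsupp
  -- the element `β₀(g)` of the Basilica group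
  set b : TreeAut m := betaAut s 0 g with hb
  have hbB : b ∈ {x : TreeAut m | ∃ g ∈ G, ∃ i < s, x = betaAut s i g} :=
    ⟨g, hgG, 0, by omega, rfl⟩
  -- `β₀(g)` is nontrivial
  have hb1 : b ≠ 1 := by
    intro hcon
    apply hg1
    apply TreeAut.ext_label
    intro u
    have := congrArg (fun t : TreeAut m => t.label (deltaWord s u)) hcon
    simp only [TreeAut.one_label] at this
    rw [hb] at this
    rw [betaAut_label', betaLabel_deltaWord] at this
    rw [this, TreeAut.one_label]
  -- `β₀(g)` has label-support at `δ(v)`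
  have hbsupp : ∀ w, ¬ deltaWord s v <+: w → b.label w = 1 := by
    intro w hw
    rw [hb, betaAut_label']
    refine betaLabel_supp s w 0 g v hlab ?_
    simpa using hw
  -- take the length-`n` prefix of `δ(v)` as the rigid vertex
  set v' : List (Fin m) := (deltaWord s v).take n with hv'
  have hv'len : v'.length = n := by
    rw [hv', List.length_take]
    have := length_le_deltaWord (m := m) s v
    omega
  have hv'pre : v' <+: deltaWord s v := List.take_prefix n _
  have hbsupp' : ∀ u, ¬ v' <+: u → b.apply u = u := by
    intro u hu
    refine apply_of_label_supp u b (deltaWord s v) hbsupp ?_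
    intro hp
    exact hu (hv'pre.trans hp)
  -- conclude
  rw [rigidLayerStab, closure_ne_bot_iff]
  exact ⟨b, ⟨Subgroup.subset_closure hbB, v', hv'len, hbsupp'⟩, hb1⟩

end Basilica
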